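/- For γ = 5/3 the map r ↦ k(r) = (r-2-√(2r-2))/(r-2+√(2r-2)) is a bijection from (1, 3-√3) onto (1, ∞), with k(r) → 1 as r → 1⁺. -/

import Mathlib

/-- For γ = 5/3, k is a bijection from (1, 3-√3) onto (1, ∞), with
k(r) → 1 as r → 1⁺. -/
theorem stmt_13 (k : ℝ → ℝ)
    (hk : ∀ r, k r = (r - 2 - Real.sqrt (2 * r - 2)) / (r - 2 + Real.sqrt (2 * r - 2))) :
    Set.BijOn k (Set.Ioo 1 (3 - Real.sqrt 3)) (Set.Ioi 1)
    ∧ Filter.Tendsto k (nhdsWithin 1 (Set.Ioi 1)) (nhds 1) := by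
  have hs3 : (Real.sqrt 3) ^ 2 = 3 := Real.sq_sqrt (by norm_num)
  have h31 : 1 < Real.sqrt 3 := by nlinarith [Real.sqrt_nonneg 3]
  have h32 : Real.sqrt 3 < 2 := by nlinarith [Real.sqrt_nonneg 3]
  -- key facts on the interval
  have key : ∀ r ∈ Set.Ioo (1:ℝ) (3 - Real.sqrt 3),
      0 < Real.sqrt (2*r-2) ∧ Real.sqrt (2*r-2) < 2 - r ∧
      k r = 1 + 2 * Real.sqrt (2*r-2) / (2 - r - Real.sqrt (2*r-2)) := by
    intro r hr
    obtain ⟨hr1, hr2⟩ := hr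
    set s := Real.sqrt (2*r-2) with hs
    have hsq : s ^ 2 = 2*r - 2 := Real.sq_sqrt (by linarith)
    have hspos : 0 < s := Real.sqrt_pos.mpr (by linarith)
    have hslt : s < 2 - r := by
      have h1 : s < Real.sqrt 3 - 1 := by nlinarith [hsq, hspos]
      linarith
    refine ⟨hspos, hslt, ?_⟩
    rw [hk, ← hs]
    have hd : r - 2 + s ≠ 0 := by intro h; nlinarith
    have hd2 : 2 - r - s ≠ 0 := by intro h; nlinarith
    field_simp
    ring
  have hmono : StrictMonoOn k (Set.Ioo 1 (3 - Real.sqrt 3)) := by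
    intro r1 h1 r2 h2 hlt
    obtain ⟨hs1, hd1, he1⟩ := key r1 h1
    obtain ⟨hs2, hd2, he2⟩ := key r2 h2
    rw [he1, he2]
    have hss : Real.sqrt (2*r1-2) < Real.sqrt (2*r2-2) :=
      Real.sqrt_lt_sqrt (by linarith [h1.1]) (by linarith)
    have hdd : 2 - r2 - Real.sqrt (2*r2-2) < 2 - r1 - Real.sqrt (2*r1-2) := by linarith
    have hdp1 : 0 < 2 - r1 - Real.sqrt (2*r1-2) := by linarith
    have hdp2 : 0 < 2 - r2 - Real.sqrt (2*r2-2) := by linarith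
    have : 2 * Real.sqrt (2*r1-2) / (2 - r1 - Real.sqrt (2*r1-2))
        < 2 * Real.sqrt (2*r2-2) / (2 - r2 - Real.sqrt (2*r2-2)) := by
      rw [div_lt_div_iff₀ hdp1 hdp2]
      nlinarith
    linarith
  have hmaps : Set.MapsTo k (Set.Ioo 1 (3 - Real.sqrt 3)) (Set.Ioi 1) := by
    intro r hr
    obtain ⟨hs, hd, he⟩ := key r hr
    have : 0 < 2 * Real.sqrt (2*r-2) / (2 - r - Real.sqrt (2*r-2)) :=
      div_pos (by linarith) (by linarith)
    simp only [Set.mem_Ioi]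
    rw [he]; linarith
  have hsurj : Set.SurjOn k (Set.Ioo 1 (3 - Real.sqrt 3)) (Set.Ioi 1) := by
    intro y hy
    simp only [Set.mem_Ioi] at hy
    set c : ℝ := (y + 1) / (y - 1) with hc
    have hy1 : (0:ℝ) < y - 1 := by linarith
    have hcy : c * (y - 1) = y + 1 := by rw [hc]; field_simp
    have hc1 : 1 < c := by rw [hc]; rw [lt_div_iff₀ hy1]; linarith
    have hrad : (0:ℝ) ≤ c ^ 2 + 2 := by positivity
    have hrq : (Real.sqrt (c^2+2)) ^ 2 = c^2 + 2 := Real.sq_sqrt hrad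
    set s : ℝ := Real.sqrt (c^2+2) - c with hsdef
    have hspos : 0 < s := by nlinarith [Real.sqrt_nonneg (c^2+2)]
    have hseq : s ^ 2 + 2 * c * s - 2 = 0 := by
      have : s ^ 2 = (Real.sqrt (c^2+2)) ^ 2 - 2 * c * Real.sqrt (c^2+2) + c^2 := by
        rw [hsdef]; ring
      nlinarith
    have hslt : s < Real.sqrt 3 - 1 := by
      nlinarith [mul_pos hspos (sub_pos.mpr hc1)]
    set r : ℝ := (s^2 + 2) / 2 with hrdef
    have hr1 : 1 < r := by nlinarith
    have hr2 : r < 3 - Real.sqrt 3 := by nlinarith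
    refine ⟨r, ⟨hr1, hr2⟩, ?_⟩
    have h2r : 2 * r - 2 = s ^ 2 := by rw [hrdef]; ring
    have hsr : Real.sqrt (2*r-2) = s := by
      rw [h2r, Real.sqrt_sq hspos.le]
    have hrc : r - 2 = -(c * s) := by nlinarith
    rw [hk, hsr, hrc]
    have hden : -(c*s) + s ≠ 0 := by nlinarith [mul_pos hspos (sub_pos.mpr hc1)]
    rw [div_eq_iff hden]
    linear_combination s * hcy
  have hbij : Set.BijOn k (Set.Ioo 1 (3 - Real.sqrt 3)) (Set.Ioi 1) :=
    ⟨hmaps, hmono.injOn, hsurj⟩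
  refine ⟨hbij, ?_⟩
  have hcont : ContinuousAt (fun r : ℝ => (r - 2 - Real.sqrt (2 * r - 2)) / (r - 2 + Real.sqrt (2 * r - 2))) 1 := by
    have hin : Continuous (fun r : ℝ => 2 * r - 2) :=
      (continuous_const.mul continuous_id).sub continuous_const
    apply ContinuousAt.div
    · exact ((continuous_id.sub continuous_const).sub
        (Real.continuous_sqrt.comp hin)).continuousAt
    · exact ((continuous_id.sub continuous_const).add
        (Real.continuous_sqrt.comp hin)).continuousAt
    · have : (2 * (1:ℝ) - 2) = 0 := by norm_num
      rw [this, Real.sqrt_zero]; norm_num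
  have hval : ((1:ℝ) - 2 - Real.sqrt (2 * 1 - 2)) / (1 - 2 + Real.sqrt (2 * 1 - 2)) = 1 := by
    have : (2 * (1:ℝ) - 2) = 0 := by norm_num
    rw [this, Real.sqrt_zero]; norm_num
  have hk' : k = fun r => (r - 2 - Real.sqrt (2 * r - 2)) / (r - 2 + Real.sqrt (2 * r - 2)) :=
    funext hk
  have : Filter.Tendsto k (nhds 1) (nhds 1) := by
    rw [hk']
    have := hcont.tendsto
    rw [hval] at this
    exact this
  exact this.mono_left nhdsWithin_le_nhds
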